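/- Let M ⊆ B(H) be a non-degenerate von Neumann algebra, ψ ∈ H a unit vector, and R a contraction in M_d ⊗ M. Then the following are equivalent: (i) (R, ψ) is a monopartite exact embezzlement protocol for α in (M, H), i.e., ⟨(R i 0)* X (R j 0) ψ, ψ⟩ = (if i = j then (α i)^2 else 0) · ⟨X ψ, ψ⟩ for all X ∈ M and all i, j ∈ Fin d; (ii) there exists a contraction T whose blocks T i j lie in the commutant M' such that (R, T, ψ) is a bipartite exact embezzlement protocol for α in (M, M', H), i.e., (R i 0)(T j 0) ψ = (if i = j then α i else 0) • ψ for all i, j ∈ Fin d. -/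

import Mathlib

open scoped InnerProductSpace
open ContinuousLinearMap

/-- The block operator on `ℓ²(Fin d; H)` associated with a `d × d` matrix of operators on `H`,
acting by `(R x) i = ∑ j, (R i j) (x j)`. -/
noncomputable def blockOp {H : Type*} [NormedAddCommGroup H] [InnerProductSpace ℂ H] {d : ℕ}
    (R : Fin d → Fin d → H →L[ℂ] H) :
    (PiLp 2 fun _ : Fin d => H) →L[ℂ] (PiLp 2 fun _ : Fin d => H) :=
  (((PiLp.continuousLinearEquiv 2 ℂ (fun _ : Fin d => H)).symm :
      (∀ _ : Fin d, H) →L[ℂ] (PiLp 2 fun _ : Fin d => H))) ∘L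
    (ContinuousLinearMap.pi fun i => ∑ j, (R i j) ∘L (ContinuousLinearMap.proj j)) ∘L
    (((PiLp.continuousLinearEquiv 2 ℂ (fun _ : Fin d => H)) :
      (PiLp 2 fun _ : Fin d => H) →L[ℂ] (∀ _ : Fin d, H)))

variable {H : Type*} [NormedAddCommGroup H] [InnerProductSpace ℂ H] [CompleteSpace H]

/-- `R` is a contraction in `M_d ⊗ M`: all blocks lie in `M` and the block operator on
`ℓ²(Fin d; H)` has operator norm at most `1`. -/
def IsContractionIn (M : VonNeumannAlgebra H) {d : ℕ}
    (R : Fin d → Fin d → H →L[ℂ] H) : Prop :=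
  (∀ i j, R i j ∈ M) ∧ ‖blockOp R‖ ≤ 1

/-- A bipartite exact embezzlement protocol for `α` in `(M, M', H)`: `R` is a contraction in
`M_d ⊗ M`, `T` is a contraction with blocks in the commutant `M'`, `ψ` is a unit vector, and
`(R i 0)(T j 0) ψ = δ_{ij} α i • ψ` for all `i, j`. -/
def BipartiteProtocol (M : VonNeumannAlgebra H) {d : ℕ} [NeZero d] (α : Fin d → ℝ)
    (R T : Fin d → Fin d → H →L[ℂ] H) (ψ : H) : Prop :=
  IsContractionIn M R ∧ IsContractionIn M.commutant T ∧ ‖ψ‖ = 1 ∧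
    ∀ i j, (R i 0) ((T j 0) ψ) = (if i = j then (α i : ℂ) else 0) • ψ

/-- A monopartite exact embezzlement protocol for `α` in `(M, H)`: `R` is a contraction in
`M_d ⊗ M`, `ψ` is a unit vector, and `⟨(R i 0)* X (R j 0) ψ, ψ⟩ = δ_{ij} (α i)² ⟨X ψ, ψ⟩`
for all `X ∈ M` and all `i, j`. -/
def MonopartiteProtocol (M : VonNeumannAlgebra H) {d : ℕ} [NeZero d] (α : Fin d → ℝ)
    (R : Fin d → Fin d → H →L[ℂ] H) (ψ : H) : Prop :=
  IsContractionIn M R ∧ ‖ψ‖ = 1 ∧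
    ∀ X ∈ M, ∀ i j : Fin d,
      ⟪(adjoint (R i 0)) (X ((R j 0) ψ)), ψ⟫_ℂ
        = (if i = j then ((α i : ℂ)) ^ 2 else 0) * ⟪X ψ, ψ⟫_ℂ

/-- The orthogonal projection of `H` onto the closure of `{Y ψ : Y ∈ S}`, as an operator
on `H`. -/
noncomputable def suppProjOn (S : Set (H →L[ℂ] H)) (ψ : H) : H →L[ℂ] H :=
  letI K := (Submodule.span ℂ ((fun Y : H →L[ℂ] H => Y ψ) '' S)).topologicalClosure
  K.subtypeL ∘L (K.orthogonalProjectionOnto : H →L[ℂ] K)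

/-- The support projection of the state `⟨· ψ, ψ⟩` on `M`: the orthogonal projection onto
the closure of `M' ψ`. -/
noncomputable def suppP (M : VonNeumannAlgebra H) (ψ : H) : H →L[ℂ] H :=
  suppProjOn (M.commutant : Set (H →L[ℂ] H)) ψ

/-- The support projection of the state `⟨· ψ, ψ⟩` on `M'`: the orthogonal projection onto
the closure of `M ψ`. -/
noncomputable def suppP' (M : VonNeumannAlgebra H) (ψ : H) : H →L[ℂ] H :=
  suppProjOn (M : Set (H →L[ℂ] H)) ψ

section helpers
variable {d : ℕ} [NeZero d]

lemma my_sq_eq {a b : ℝ} (ha : 0 ≤ a) (hb : 0 ≤ b) (h : a ^ 2 = b ^ 2) : a = b := by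
  nlinarith [sq_nonneg (a - b), sq_nonneg (a + b)]

lemma blockOp_apply (R : Fin d → Fin d → H →L[ℂ] H) (x : PiLp 2 fun _ : Fin d => H)
    (i : Fin d) : blockOp R x i = ∑ j, R i j (x j) := by
  simp [blockOp, ContinuousLinearMap.sum_apply]

noncomputable def colVec (v : H) : PiLp 2 (fun _ : Fin d => H) :=
  (WithLp.equiv 2 _).symm (Pi.single 0 v)

lemma colVec_apply (v : H) (k : Fin d) : colVec v k = if k = 0 then v else 0 := by
  simp [colVec, Pi.single_apply]

lemma colVec_norm_sq (v : H) : ‖(colVec v : PiLp 2 (fun _ : Fin d => H))‖ ^ 2 = ‖v‖ ^ 2 := by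
  classical
  rw [PiLp.norm_sq_eq_of_L2]
  have : ∀ k : Fin d, ‖(colVec v : PiLp 2 (fun _ : Fin d => H)) k‖ ^ 2
      = if k = 0 then ‖v‖ ^ 2 else 0 := by
    intro k; rw [colVec_apply]; split_ifs <;> simp
  rw [Finset.sum_congr rfl fun k _ => this k, Finset.sum_ite_eq']
  simp

lemma col_sum_sq_le (Q : Fin d → Fin d → H →L[ℂ] H) (hQ : ‖blockOp Q‖ ≤ 1) (v : H) :
    ∑ i, ‖Q i 0 v‖ ^ 2 ≤ ‖v‖ ^ 2 := by
  classical
  have h1 : ∀ i, blockOp Q (colVec v) i = Q i 0 v := by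
    intro i
    rw [blockOp_apply]
    have : ∀ j : Fin d, Q i j ((colVec v : PiLp 2 (fun _ : Fin d => H)) j)
        = if j = 0 then Q i 0 v else 0 := by
      intro j; rw [colVec_apply]; split_ifs with h <;> simp [h]
    rw [Finset.sum_congr rfl fun j _ => this j, Finset.sum_ite_eq']
    simp
  have h2 : ∑ i, ‖Q i 0 v‖ ^ 2 = ‖blockOp Q (colVec v)‖ ^ 2 := by
    rw [PiLp.norm_sq_eq_of_L2]
    exact (Finset.sum_congr rfl fun i _ => by rw [h1]).symm
  have h3 : ‖blockOp Q (colVec v)‖ ≤ ‖(colVec v : PiLp 2 (fun _ : Fin d => H))‖ := by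
    calc ‖blockOp Q (colVec v)‖ ≤ ‖blockOp Q‖ * ‖(colVec v : PiLp 2 (fun _ : Fin d => H))‖ :=
          le_opNorm _ _
      _ ≤ 1 * _ := by gcongr
      _ = _ := one_mul _
  have h4 : ‖blockOp Q (colVec v)‖ ^ 2 ≤ ‖(colVec v : PiLp 2 (fun _ : Fin d => H))‖ ^ 2 := by
    have := norm_nonneg (blockOp Q (colVec v))
    gcongr
  rw [h2]
  calc ‖blockOp Q (colVec v)‖ ^ 2 ≤ _ := h4
    _ = ‖v‖ ^ 2 := colVec_norm_sq v

lemma col_blockOp_norm_le (t : Fin d → H →L[ℂ] H)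
    (h : ∀ v, ∑ i, ‖t i v‖ ^ 2 ≤ ‖v‖ ^ 2) :
    ‖blockOp (fun i k => if k = 0 then t i else (0 : H →L[ℂ] H))‖ ≤ 1 := by
  classical
  refine opNorm_le_bound _ zero_le_one fun x => ?_
  rw [one_mul]
  have happ : ∀ i, blockOp (fun i k => if k = 0 then t i else (0 : H →L[ℂ] H)) x i
      = t i (x 0) := by
    intro i
    rw [blockOp_apply]
    have : ∀ k : Fin d, (if k = 0 then t i else (0 : H →L[ℂ] H)) (x k)
        = if k = 0 then t i (x 0) else 0 := by
      intro k
      by_cases hk : k = 0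
      · subst hk; simp
      · simp [hk]
    rw [Finset.sum_congr rfl fun k _ => this k, Finset.sum_ite_eq']
    simp
  have hsq : ‖blockOp (fun i k => if k = 0 then t i else (0 : H →L[ℂ] H)) x‖ ^ 2 ≤ ‖x‖ ^ 2 := by
    rw [PiLp.norm_sq_eq_of_L2, PiLp.norm_sq_eq_of_L2]
    calc ∑ i, ‖blockOp (fun i k => if k = 0 then t i else (0 : H →L[ℂ] H)) x i‖ ^ 2
        = ∑ i, ‖t i (x 0)‖ ^ 2 := Finset.sum_congr rfl fun i _ => by rw [happ]
      _ ≤ ‖x 0‖ ^ 2 := h _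
      _ ≤ ∑ i, ‖x i‖ ^ 2 :=
          Finset.single_le_sum (f := fun i : Fin d => ‖x i‖ ^ 2)
            (fun i _ => sq_nonneg _) (Finset.mem_univ (0 : Fin d))
  nlinarith [norm_nonneg (blockOp (fun i k => if k = 0 then t i else (0 : H →L[ℂ] H)) x),
    norm_nonneg x]

lemma fixed_of_sum_sq (t : Fin d → H →L[ℂ] H)
    (h : ∀ v, ∑ k, ‖t k v‖ ^ 2 ≤ ‖v‖ ^ 2) (ψ : H) (heq : ∑ k, ‖t k ψ‖ ^ 2 = ‖ψ‖ ^ 2) :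
    ∑ k, adjoint (t k) (t k ψ) = ψ := by
  classical
  set A := ∑ k, adjoint (t k) (t k ψ) with hA
  set u := ψ - A with hu
  have hAu : A = ψ - u := by rw [hu]; abel
  have hsum : ∑ k, ⟪t k ψ, t k u⟫_ℂ = ⟪ψ, u⟫_ℂ - ⟪u, u⟫_ℂ := by
    have h1 : ∀ k, ⟪t k ψ, t k u⟫_ℂ = ⟪adjoint (t k) (t k ψ), u⟫_ℂ := fun k =>
      (adjoint_inner_left (t k) u (t k ψ)).symm
    rw [Finset.sum_congr rfl fun k _ => h1 k, ← sum_inner, ← hA, hAu, inner_sub_left]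
  have hre : ∑ k, RCLike.re (⟪t k ψ, t k u⟫_ℂ) = RCLike.re ⟪ψ, u⟫_ℂ - ‖u‖ ^ 2 := by
    have := congrArg RCLike.re hsum
    rw [map_sum] at this
    rw [this, map_sub]
    congr 1
    rw [inner_self_eq_norm_sq_to_K]
    simp [← Complex.ofReal_pow]
  have e1 : ‖A‖ ^ 2 = ‖ψ‖ ^ 2 - 2 * RCLike.re ⟪ψ, u⟫_ℂ + ‖u‖ ^ 2 := by
    rw [hAu, norm_sub_sq (𝕜 := ℂ)]
  have e2 : ∀ k, ‖t k A‖ ^ 2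
      = ‖t k ψ‖ ^ 2 - 2 * RCLike.re ⟪t k ψ, t k u⟫_ℂ + ‖t k u‖ ^ 2 := fun k => by
    rw [hAu, map_sub, norm_sub_sq (𝕜 := ℂ)]
  have e3 : ∑ k, ‖t k A‖ ^ 2
      = ∑ k, ‖t k ψ‖ ^ 2 - 2 * (RCLike.re ⟪ψ, u⟫_ℂ - ‖u‖ ^ 2) + ∑ k, ‖t k u‖ ^ 2 := by
    rw [Finset.sum_congr rfl fun k _ => e2 k]
    rw [← hre, Finset.mul_sum]
    rw [Finset.sum_add_distrib, Finset.sum_sub_distrib]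
  have hineq := h A
  have hnn : (0:ℝ) ≤ ∑ k, ‖t k u‖ ^ 2 := Finset.sum_nonneg fun k _ => sq_nonneg _
  have husq : ‖u‖ ^ 2 ≤ 0 := by
    rw [e3, heq, e1] at hineq
    linarith
  have hu0 : u = 0 := by
    have : ‖u‖ = 0 := by nlinarith [norm_nonneg u]
    exact norm_eq_zero.mp this
  have h5 : ψ - A = 0 := by rw [← hu, hu0]
  exact (sub_eq_zero.mp h5).symm
end helpers

section keylemmas
variable {d : ℕ} [NeZero d]

lemma key_inner {M : VonNeumannAlgebra H} {α : Fin d → ℝ} {R : Fin d → Fin d → H →L[ℂ] H}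
    {ψ : H}
    (hm : ∀ X ∈ M, ∀ i j : Fin d,
      ⟪(adjoint (R i 0)) (X ((R j 0) ψ)), ψ⟫_ℂ
        = (if i = j then ((α i : ℂ)) ^ 2 else 0) * ⟪X ψ, ψ⟫_ℂ)
    {X Y : H →L[ℂ] H} (hX : X ∈ M) (hY : Y ∈ M) (i j : Fin d) :
    ⟪X ((R j 0) ψ), Y ((R i 0) ψ)⟫_ℂ
      = (if i = j then ((α i : ℂ)) ^ 2 else 0) * ⟪X ψ, Y ψ⟫_ℂ := by
  have hZ : (star Y * X) ∈ M := mul_mem (star_mem hY) hX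
  have h1 : ∀ u w : H, ⟪X u, Y w⟫_ℂ = ⟪(star Y * X) u, w⟫_ℂ := by
    intro u w
    rw [ContinuousLinearMap.mul_apply, star_eq_adjoint, adjoint_inner_left]
  have h2 : ⟪(star Y * X) ((R j 0) ψ), (R i 0) ψ⟫_ℂ
      = ⟪adjoint (R i 0) ((star Y * X) ((R j 0) ψ)), ψ⟫_ℂ := (adjoint_inner_left _ _ _).symm
  rw [h1, h2, hm _ hZ i j, ← h1]

lemma key_norm {M : VonNeumannAlgebra H} {α : Fin d → ℝ} {R : Fin d → Fin d → H →L[ℂ] H}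
    {ψ : H}
    (hm : ∀ X ∈ M, ∀ i j : Fin d,
      ⟪(adjoint (R i 0)) (X ((R j 0) ψ)), ψ⟫_ℂ
        = (if i = j then ((α i : ℂ)) ^ 2 else 0) * ⟪X ψ, ψ⟫_ℂ)
    (hα : ∀ i, 0 < α i)
    {X : H →L[ℂ] H} (hX : X ∈ M) (j : Fin d) :
    ‖X ((R j 0) ψ)‖ = α j * ‖X ψ‖ := by
  have h := key_inner hm hX hX j j
  rw [if_pos rfl] at h
  rw [inner_self_eq_norm_sq_to_K, inner_self_eq_norm_sq_to_K] at h
  have h' : (‖X ((R j 0) ψ)‖ : ℝ) ^ 2 = (α j * ‖X ψ‖) ^ 2 := by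
    have h2 := congrArg Complex.re h
    rw [mul_pow]
    simpa [← Complex.ofReal_pow, ← Complex.ofReal_mul] using h2
  exact my_sq_eq (norm_nonneg _) (mul_nonneg (hα j).le (norm_nonneg _)) h'

end keylemmas

section easydir
variable {d : ℕ} [NeZero d]

lemma easy_dir (M : VonNeumannAlgebra H) (α : Fin d → ℝ) (hα : ∀ i, 0 < α i)
    (hsum : ∑ i, (α i) ^ 2 = 1) (R T : Fin d → Fin d → H →L[ℂ] H) (ψ : H)
    (hb : BipartiteProtocol M α R T ψ) : MonopartiteProtocol M α R ψ := by
  classical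
  obtain ⟨hR, hT, hψ, hp⟩ := hb
  refine ⟨hR, hψ, ?_⟩
  intro X hX i j
  have hcomm : ∀ (k : Fin d) (g : H →L[ℂ] H), g ∈ M → ∀ v, T k 0 (g v) = g (T k 0 v) := by
    intro k g hg v
    have h := (VonNeumannAlgebra.mem_commutant_iff.mp (hT.1 k 0)) g hg
    have h2 := congrArg (fun (A : H →L[ℂ] H) => A v) h
    simpa [ContinuousLinearMap.mul_apply] using h2.symm
  have hcomm' : ∀ (k : Fin d) (g : H →L[ℂ] H), g ∈ M → ∀ v,
      adjoint (T k 0) (g v) = g (adjoint (T k 0) v) := by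
    intro k g hg v
    have hmem : adjoint (T k 0) ∈ M.commutant := by
      rw [← star_eq_adjoint]; exact star_mem (hT.1 k 0)
    have h := (VonNeumannAlgebra.mem_commutant_iff.mp hmem) g hg
    have h2 := congrArg (fun (A : H →L[ℂ] H) => A v) h
    simpa [ContinuousLinearMap.mul_apply] using h2.symm
  have bound1 := col_sum_sq_le T hT.2
  have bound2 : ∀ k, α k ^ 2 ≤ ‖T k 0 ψ‖ ^ 2 := by
    intro k
    have h := col_sum_sq_le R hR.2 (T k 0 ψ)
    have h2 : ∀ i : Fin d, ‖R i 0 (T k 0 ψ)‖ ^ 2 = if i = k then α i ^ 2 else 0 := by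
      intro i
      rw [hp i k]
      split_ifs with hik
      · rw [norm_smul, hψ]
        simp [abs_of_pos (hα i), mul_pow]
      · simp
    rw [Finset.sum_congr rfl (fun i _ => h2 i), Finset.sum_ite_eq'] at h
    simpa using h
  have hsum2 : ∑ k, ‖T k 0 ψ‖ ^ 2 = ‖ψ‖ ^ 2 := by
    have hle : ∑ k, ‖T k 0 ψ‖ ^ 2 ≤ ‖ψ‖ ^ 2 := bound1 ψ
    have hge : ‖ψ‖ ^ 2 ≤ ∑ k, ‖T k 0 ψ‖ ^ 2 := by
      rw [hψ, one_pow, ← hsum]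
      exact Finset.sum_le_sum (fun k _ => bound2 k)
    linarith
  have hfix := fixed_of_sum_sq (fun k => T k 0) bound1 ψ hsum2
  have hg : X * R j 0 ∈ M := mul_mem hX (hR.1 j 0)
  have hXR : X ((R j 0) ψ) = ∑ k, adjoint (T k 0) (T k 0 (X ((R j 0) ψ))) := by
    calc X ((R j 0) ψ) = (X * R j 0) ψ := rfl
      _ = (X * R j 0) (∑ k, adjoint (T k 0) (T k 0 ψ)) := by rw [hfix]
      _ = ∑ k, (X * R j 0) (adjoint (T k 0) (T k 0 ψ)) := by rw [map_sum]
      _ = ∑ k, adjoint (T k 0) (T k 0 (X ((R j 0) ψ))) := by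
          refine Finset.sum_congr rfl fun k _ => ?_
          rw [← hcomm' k _ hg ((T k 0) ψ), ← hcomm k _ hg ψ]
          rfl
  calc ⟪adjoint (R i 0) (X ((R j 0) ψ)), ψ⟫_ℂ
      = ⟪X ((R j 0) ψ), (R i 0) ψ⟫_ℂ := adjoint_inner_left _ _ _
    _ = ∑ k, ⟪adjoint (T k 0) (T k 0 (X ((R j 0) ψ))), (R i 0) ψ⟫_ℂ := by
        rw [← sum_inner, ← hXR]
    _ = ∑ k, ⟪T k 0 (X ((R j 0) ψ)), T k 0 ((R i 0) ψ)⟫_ℂ := by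
        exact Finset.sum_congr rfl fun k _ => adjoint_inner_left _ _ _
    _ = ∑ k, ⟪X ((R j 0) (T k 0 ψ)), (R i 0) (T k 0 ψ)⟫_ℂ := by
        refine Finset.sum_congr rfl fun k _ => ?_
        have e1 : T k 0 (X ((R j 0) ψ)) = X ((R j 0) (T k 0 ψ)) := by
          have h2 := hcomm k _ hg ψ
          simpa [ContinuousLinearMap.mul_apply] using h2
        have e2 : T k 0 ((R i 0) ψ) = (R i 0) (T k 0 ψ) := hcomm k _ (hR.1 i 0) ψ
        rw [e1, e2]
    _ = ∑ k, (starRingEnd ℂ) (if j = k then (α j : ℂ) else 0)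
          * ((if i = k then (α i : ℂ) else 0) * ⟪X ψ, ψ⟫_ℂ) := by
        refine Finset.sum_congr rfl fun k _ => ?_
        rw [hp j k, hp i k, map_smul, inner_smul_left, inner_smul_right]
    _ = (if i = j then ((α i : ℂ)) ^ 2 else 0) * ⟪X ψ, ψ⟫_ℂ := by
        have hterm : ∀ k, (starRingEnd ℂ) (if j = k then (α j : ℂ) else 0)
            * ((if i = k then (α i : ℂ) else 0) * ⟪X ψ, ψ⟫_ℂ)
            = if j = k then ((α j : ℂ) * (if i = k then (α i : ℂ) else 0) * ⟪X ψ, ψ⟫_ℂ)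
              else 0 := by
          intro k
          split_ifs <;> simp [Complex.conj_ofReal] <;> ring
        rw [Finset.sum_congr rfl fun k _ => hterm k, Finset.sum_ite_eq]
        simp only [Finset.mem_univ, if_true]
        by_cases hij : i = j
        · subst hij; simp only [if_pos rfl]; push_cast; ring
        · simp [hij, Ne.symm hij]

end easydir


section harddir

/-- Evaluation at `ψ` as a linear map. -/
noncomputable def evLin (ψ : H) : (H →L[ℂ] H) →ₗ[ℂ] H where
  toFun X := X ψ
  map_add' _ _ := rfl
  map_smul' _ _ := rfl

/-- The subspace `M ψ`. -/
noncomputable abbrev K0 (M : VonNeumannAlgebra H) (ψ : H) : Submodule ℂ H :=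
  (Subalgebra.toSubmodule M.toStarSubalgebra.toSubalgebra).map (evLin ψ)

/-- The closure of `M ψ`. -/
noncomputable abbrev Kc (M : VonNeumannAlgebra H) (ψ : H) : Submodule ℂ H :=
  (K0 M ψ).topologicalClosure

lemma mem_K0 {M : VonNeumannAlgebra H} {ψ v : H} : v ∈ K0 M ψ ↔ ∃ X ∈ M, X ψ = v := by
  simp only [K0, Submodule.mem_map, Subalgebra.mem_toSubmodule]
  rfl

lemma hard_dir {d : ℕ} [NeZero d] (M : VonNeumannAlgebra H) (α : Fin d → ℝ)
    (hα : ∀ i, 0 < α i) (R : Fin d → Fin d → H →L[ℂ] H) (ψ : H)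
    (hmono : MonopartiteProtocol M α R ψ) :
    ∃ T : Fin d → Fin d → H →L[ℂ] H, BipartiteProtocol M α R T ψ := by
  classical
  obtain ⟨hR, hψ, hm⟩ := hmono
  have hψK0 : ψ ∈ K0 M ψ := mem_K0.mpr ⟨1, one_mem M, by simp⟩
  have hψK : ψ ∈ Kc M ψ := (K0 M ψ).le_topologicalClosure hψK0
  have hXK0 : ∀ X ∈ M, ∀ v ∈ K0 M ψ, X v ∈ K0 M ψ := by
    intro X hX v hv
    obtain ⟨Y, hY, rfl⟩ := mem_K0.mp hv
    exact mem_K0.mpr ⟨X * Y, mul_mem hX hY, rfl⟩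
  have hKcl : ∀ w : H, w ∈ Kc M ψ ↔ w ∈ closure (K0 M ψ : Set H) := by
    intro w
    rw [← SetLike.mem_coe, Submodule.topologicalClosure_coe]
  have hXK : ∀ X ∈ M, ∀ v ∈ Kc M ψ, X v ∈ Kc M ψ := by
    intro X hX v hv
    rw [hKcl] at hv ⊢
    exact map_mem_closure X.continuous hv fun u hu => hXK0 X hX u hu
  have hex : ∀ v : K0 M ψ, ∃ X : H →L[ℂ] H, X ∈ M ∧ X ψ = (v : H) := fun v => by
    obtain ⟨X, hX, hXv⟩ := mem_K0.mp v.2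
    exact ⟨X, hX, hXv⟩
  choose F hFmem hFψ using hex
  have hwd : ∀ (j : Fin d) (X Y : H →L[ℂ] H), X ∈ M → Y ∈ M → X ψ = Y ψ →
      X ((R j 0) ψ) = Y ((R j 0) ψ) := by
    intro j X Y hX hY hXY
    have h := key_norm hm hα (sub_mem hX hY) j
    have h0 : (X - Y) ψ = 0 := by rw [ContinuousLinearMap.sub_apply, hXY, sub_self]
    rw [h0, norm_zero, mul_zero, norm_eq_zero, ContinuousLinearMap.sub_apply,
      sub_eq_zero] at h
    exact h
  have hFnorm : ∀ (j : Fin d) (v : K0 M ψ), ‖(F v) ((R j 0) ψ)‖ = α j * ‖(v : H)‖ := by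
    intro j v
    rw [key_norm hm hα (hFmem v) j, hFψ]
  have hnormα : ∀ j : Fin d, ‖((α j : ℝ) : ℂ)‖ = α j := fun j => by
    rw [Complex.norm_real]
    exact abs_of_pos (hα j)
  obtain ⟨ℓ, hℓ⟩ : ∃ ℓ : Fin d → (K0 M ψ →L[ℂ] H),
      ∀ (j : Fin d) (v : K0 M ψ), ℓ j v = (α j : ℂ)⁻¹ • (F v) ((R j 0) ψ) := by
    refine ⟨fun j => LinearMap.mkContinuous
      { toFun := fun v => (α j : ℂ)⁻¹ • (F v) ((R j 0) ψ)
        map_add' := ?_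
        map_smul' := ?_ } 1 ?_, fun j v => rfl⟩
    · intro u v
      have h1 : (F (u + v)) ψ = (F u + F v) ψ := by
        rw [hFψ, ContinuousLinearMap.add_apply, hFψ, hFψ]
        rfl
      rw [hwd j _ _ (hFmem _) (add_mem (hFmem u) (hFmem v)) h1,
        ContinuousLinearMap.add_apply, smul_add]
    · intro c v
      have hcm : c • F v ∈ M := Subalgebra.smul_mem _ (hFmem v) c
      have h1 : (F (c • v)) ψ = (c • F v) ψ := by
        rw [hFψ, ContinuousLinearMap.smul_apply, hFψ]
        rfl
      rw [hwd j _ _ (hFmem _) hcm h1, ContinuousLinearMap.smul_apply]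
      simp only [RingHom.id_apply]
      rw [smul_comm]
    · intro v
      show ‖(α j : ℂ)⁻¹ • (F v) ((R j 0) ψ)‖ ≤ 1 * ‖(v : H)‖
      rw [norm_smul, norm_inv, hnormα, hFnorm, one_mul]
      rw [inv_mul_cancel_left₀ (hα j).ne']
  have hℓnorm : ∀ (j : Fin d) (v : K0 M ψ), ‖ℓ j v‖ = ‖(v : H)‖ := by
    intro j v
    rw [hℓ, norm_smul, norm_inv, hnormα, hFnorm, inv_mul_cancel_left₀ (hα j).ne']
  have hℓorth : ∀ {j j' : Fin d}, j ≠ j' → ∀ (v v' : K0 M ψ), ⟪ℓ j v, ℓ j' v'⟫_ℂ = 0 := by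
    intro j j' hjj v v'
    rw [hℓ, hℓ, inner_smul_left, inner_smul_right,
      key_inner hm (hFmem v) (hFmem v') j' j, if_neg fun h => hjj h.symm]
    ring
  have hℓψ : ∀ (i j : Fin d) (v : K0 M ψ),
      ⟪(R i 0) ψ, ℓ j v⟫_ℂ = (if i = j then (α i : ℂ) else 0) * ⟪ψ, (v : H)⟫_ℂ := by
    intro i j v
    rw [hℓ, inner_smul_right]
    have h1 : ⟪(R i 0) ψ, (F v) ((R j 0) ψ)⟫_ℂ
        = ⟪(1 : H →L[ℂ] H) ((R i 0) ψ), (F v) ((R j 0) ψ)⟫_ℂ := by simp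
    rw [h1, key_inner hm (one_mem M) (hFmem v) j i, ContinuousLinearMap.one_apply, hFψ]
    by_cases hij : i = j
    · subst hij
      rw [if_pos rfl, if_pos rfl]
      have : ((α i : ℂ))⁻¹ * ((α i : ℂ) ^ 2 * ⟪ψ, (v : H)⟫_ℂ) = (α i : ℂ) * ⟪ψ, (v : H)⟫_ℂ := by
        have hne : ((α i : ℝ) : ℂ) ≠ 0 := by
          simp only [ne_eq, Complex.ofReal_eq_zero]
          exact (hα i).ne'
        field_simp
      rw [this]
    · rw [if_neg fun h => hij h.symm, if_neg hij]
      ring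
  obtain ⟨e, he⟩ : ∃ e : K0 M ψ →L[ℂ] Kc M ψ, ∀ v : K0 M ψ, ((e v : H)) = (v : H) :=
    ⟨LinearMap.mkContinuous (Submodule.inclusion ((K0 M ψ).le_topologicalClosure)) 1
      (fun v => by rw [one_mul]; rfl), fun v => rfl⟩
  have heiso : Isometry e :=
    AddMonoidHomClass.isometry_of_norm e fun v => by
      rw [show ‖e v‖ = ‖((e v : H))‖ from rfl, he]
      rfl
  have hedense : DenseRange e := by
    intro x
    rw [closure_subtype]
    have himg : Subtype.val '' Set.range e = (K0 M ψ : Set H) := by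
      ext w
      constructor
      · rintro ⟨y, ⟨v, rfl⟩, rfl⟩
        rw [he]
        exact v.2
      · intro hw
        exact ⟨e ⟨w, hw⟩, ⟨⟨w, hw⟩, rfl⟩, he _⟩
    rw [himg]
    have hx := x.2
    rw [hKcl] at hx
    exact hx
  obtain ⟨SK, hSK⟩ : ∃ SK : Fin d → (Kc M ψ →L[ℂ] H),
      ∀ (j : Fin d) (v : K0 M ψ), SK j (e v) = ℓ j v :=
    ⟨fun j => (ℓ j).extend e,
     fun j v => ContinuousLinearMap.extend_eq _ hedense heiso.isUniformInducing _⟩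
  obtain ⟨S, hS⟩ : ∃ S : Fin d → (H →L[ℂ] H), ∀ (j : Fin d) (v : H),
      S j v = SK j (Submodule.orthogonalProjectionOnto (Kc M ψ) v) :=
    ⟨fun j => (SK j).comp (Submodule.orthogonalProjectionOnto (Kc M ψ)), fun _ _ => rfl⟩
  have hPX : ∀ X ∈ M, ∀ v : H,
      ((Submodule.orthogonalProjectionOnto (Kc M ψ) (X v)) : H)
        = X ((Submodule.orthogonalProjectionOnto (Kc M ψ) v : H)) := by
    intro X hX v
    refine Submodule.eq_starProjection_of_mem_of_inner_eq_zero
      (hXK X hX _ (Submodule.orthogonalProjectionOnto (Kc M ψ) v).2) ?_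
    intro w hw
    rw [← map_sub]
    have hu : (v - ((Submodule.orthogonalProjectionOnto (Kc M ψ) v) : H)) ∈ (Kc M ψ)ᗮ :=
      Submodule.sub_starProjection_mem_orthogonal v
    rw [← adjoint_inner_right X]
    have hadj : adjoint X ∈ M := by
      rw [← star_eq_adjoint]
      exact star_mem hX
    exact ((Kc M ψ).mem_orthogonal' _).mp hu _ (hXK _ hadj _ hw)
  have hSKX : ∀ X, X ∈ M → ∀ (j : Fin d) (k : Kc M ψ) (hk : X (k : H) ∈ Kc M ψ),
      SK j ⟨X (k : H), hk⟩ = X (SK j k) := by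
    intro X hX j k hk
    set XK : Kc M ψ →L[ℂ] Kc M ψ :=
      (X.comp (Kc M ψ).subtypeL).codRestrict (Kc M ψ) (fun u => hXK X hX _ u.2) with hXKdef
    have key : (fun k : Kc M ψ => SK j (XK k)) = fun k => X (SK j k) := by
      refine hedense.equalizer ((SK j).continuous.comp XK.continuous)
        (X.continuous.comp (SK j).continuous) ?_
      funext v
      simp only [Function.comp_apply]
      have h1 : XK (e v) = e ⟨X (v : H), hXK0 X hX _ v.2⟩ := by
        apply Subtype.ext
        show X ((e v : H)) = ((e ⟨X (v : H), hXK0 X hX _ v.2⟩ : Kc M ψ) : H)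
        rw [he, he]
      rw [h1, hSK, hSK]
      rw [hℓ, hℓ]
      have h3 : (F ⟨X (v : H), hXK0 X hX _ v.2⟩) ((R j 0) ψ) = (X * F v) ((R j 0) ψ) := by
        apply hwd j _ _ (hFmem _) (mul_mem hX (hFmem v))
        rw [hFψ, ContinuousLinearMap.mul_apply, hFψ]
      rw [h3, ContinuousLinearMap.mul_apply, map_smul]
    have h4 : XK k = ⟨X (k : H), hk⟩ := by
      apply Subtype.ext
      rfl
    rw [← h4]
    exact congrFun key k
  have hSX : ∀ X, X ∈ M → ∀ (j : Fin d) (v : H), S j (X v) = X (S j v) := by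
    intro X hX j v
    rw [hS, hS]
    have h1 : Submodule.orthogonalProjectionOnto (Kc M ψ) (X v)
        = ⟨X ((Submodule.orthogonalProjectionOnto (Kc M ψ) v : H)),
            hXK X hX _ (Submodule.orthogonalProjectionOnto (Kc M ψ) v).2⟩ :=
      Subtype.ext (hPX X hX v)
    rw [h1, hSKX X hX j _ _]
  have hSKnorm : ∀ (j : Fin d) (k : Kc M ψ), ‖SK j k‖ = ‖(k : H)‖ := by
    intro j
    have key : (fun k : Kc M ψ => ‖SK j k‖) = fun k : Kc M ψ => ‖(k : H)‖ := by
      refine hedense.equalizer (SK j).continuous.norm continuous_subtype_val.norm ?_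
      funext v
      simp only [Function.comp_apply]
      rw [hSK, hℓnorm, he]
    exact fun k => congrFun key k
  have hSKorth : ∀ {j j' : Fin d}, j ≠ j' → ∀ (a b : Kc M ψ), ⟪SK j a, SK j' b⟫_ℂ = 0 := by
    intro j j' hjj
    have step1 : ∀ (v : K0 M ψ) (b : Kc M ψ), ⟪SK j (e v), SK j' b⟫_ℂ = 0 := by
      intro v
      have key : (fun b : Kc M ψ => ⟪SK j (e v), SK j' b⟫_ℂ) = fun _ => (0 : ℂ) := by
        refine hedense.equalizer (Continuous.inner continuous_const (SK j').continuous)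
          continuous_const ?_
        funext v'
        simp only [Function.comp_apply]
        rw [hSK, hSK]
        exact hℓorth hjj v v'
      exact fun b => congrFun key b
    intro a b
    have key : (fun a : Kc M ψ => ⟪SK j a, SK j' b⟫_ℂ) = fun _ => (0 : ℂ) := by
      refine hedense.equalizer (Continuous.inner (SK j).continuous continuous_const)
        continuous_const ?_
      funext v
      exact step1 v b
    exact congrFun key a
  obtain ⟨t, ht⟩ : ∃ t : Fin d → (H →L[ℂ] H), ∀ j, t j = adjoint (S j) :=
    ⟨fun j => adjoint (S j), fun _ => rfl⟩
  have htmem : ∀ j, t j ∈ M.commutant := by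
    intro j
    rw [VonNeumannAlgebra.mem_commutant_iff]
    intro g hg
    have h1 : (S j).comp (star g) = (star g).comp (S j) :=
      ContinuousLinearMap.ext fun v => by
        simp only [ContinuousLinearMap.comp_apply]
        exact hSX (star g) (star_mem hg) j v
    have h2 := congrArg adjoint h1
    rw [adjoint_comp, adjoint_comp] at h2
    have h3 : adjoint (star g) = g := by rw [star_eq_adjoint, adjoint_adjoint]
    rw [h3, ← ht j] at h2
    rw [ContinuousLinearMap.mul_def, ContinuousLinearMap.mul_def]
    exact h2
  have hS_orthzero : ∀ (j : Fin d) (u : H), u ∈ (Kc M ψ)ᗮ → S j u = 0 := by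
    intro j u hu
    rw [hS, Submodule.orthogonalProjectionOnto_apply_of_mem_orthogonal hu, map_zero]
  have ht_inner_orth : ∀ (j : Fin d) (x u : H), u ∈ (Kc M ψ)ᗮ → ⟪t j x, u⟫_ℂ = 0 := by
    intro j x u hu
    rw [ht, adjoint_inner_left, hS_orthzero j u hu, inner_zero_right]
  have hmain : ∀ i j : Fin d, t j ((R i 0) ψ) = (if i = j then (α i : ℂ) else 0) • ψ := by
    intro i j
    apply ext_inner_right ℂ
    intro u
    have hKpart : ∀ k : Kc M ψ, ⟪t j ((R i 0) ψ), (k : H)⟫_ℂ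
        = ⟪(if i = j then (α i : ℂ) else 0) • ψ, (k : H)⟫_ℂ := by
      have key : (fun k : Kc M ψ => ⟪t j ((R i 0) ψ), (k : H)⟫_ℂ)
          = fun k : Kc M ψ => ⟪(if i = j then (α i : ℂ) else 0) • ψ, (k : H)⟫_ℂ := by
        refine hedense.equalizer
          (Continuous.inner continuous_const continuous_subtype_val)
          (Continuous.inner continuous_const continuous_subtype_val) ?_
        funext v
        simp only [Function.comp_apply]
        have h1 : ⟪t j ((R i 0) ψ), ((e v : H))⟫_ℂ = ⟪(R i 0) ψ, S j ((v : H))⟫_ℂ := by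
          rw [ht, adjoint_inner_left, he]
        have h2 : S j ((v : H)) = ℓ j v := by
          rw [hS]
          have h3 : Submodule.orthogonalProjectionOnto (Kc M ψ) ((v : H)) = e v := by
            have h4 := Submodule.orthogonalProjectionOnto_mem_subspace_eq_self
              (K := Kc M ψ) ⟨(v : H), (K0 M ψ).le_topologicalClosure v.2⟩
            exact h4.trans (Subtype.ext (he v).symm)
          rw [h3, hSK]
        rw [h1, h2, hℓψ i j v, inner_smul_left, he]
        congr 1
        split_ifs <;> simp [Complex.conj_ofReal]
      exact fun k => congrFun key k
    have horth : ∀ w : H, w ∈ (Kc M ψ)ᗮ →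
        ⟪t j ((R i 0) ψ), w⟫_ℂ = ⟪(if i = j then (α i : ℂ) else 0) • ψ, w⟫_ℂ := by
      intro w hw
      rw [ht_inner_orth j _ w hw, inner_smul_left,
        ((Kc M ψ).mem_orthogonal _).mp hw ψ hψK, mul_zero]
    have hdecomp : u = ((Submodule.orthogonalProjectionOnto (Kc M ψ) u : H))
        + (u - ((Submodule.orthogonalProjectionOnto (Kc M ψ) u) : H)) := by abel
    calc ⟪t j ((R i 0) ψ), u⟫_ℂ
        = ⟪t j ((R i 0) ψ), ((Submodule.orthogonalProjectionOnto (Kc M ψ) u : H))⟫_ℂ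
          + ⟪t j ((R i 0) ψ), u - ((Submodule.orthogonalProjectionOnto (Kc M ψ) u) : H)⟫_ℂ := by
          rw [← inner_add_right, ← hdecomp]
      _ = ⟪(if i = j then (α i : ℂ) else 0) • ψ, ((Submodule.orthogonalProjectionOnto (Kc M ψ) u : H))⟫_ℂ
          + ⟪(if i = j then (α i : ℂ) else 0) • ψ,
              u - ((Submodule.orthogonalProjectionOnto (Kc M ψ) u) : H)⟫_ℂ := by
          rw [hKpart, horth (u - ((Submodule.orthogonalProjectionOnto (Kc M ψ) u) : H)) (Submodule.sub_starProjection_mem_orthogonal u)]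
      _ = ⟪(if i = j then (α i : ℂ) else 0) • ψ, u⟫_ℂ := by
          rw [← inner_add_right, ← hdecomp]
  have hfinal : ∀ i j : Fin d, (R i 0) (t j ψ) = (if i = j then (α i : ℂ) else 0) • ψ := by
    intro i j
    have hcm := VonNeumannAlgebra.mem_commutant_iff.mp (htmem j) (R i 0) (hR.1 i 0)
    have h1 := congrArg (fun A : H →L[ℂ] H => A ψ) hcm
    simp only [ContinuousLinearMap.mul_apply] at h1
    rw [h1, hmain i j]
  have hnormS : ∀ (k : Fin d) (x : H), ‖S k x‖ ≤ ‖x‖ := by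
    intro k x
    rw [hS, hSKnorm]
    calc ‖((Submodule.orthogonalProjectionOnto (Kc M ψ) x : Kc M ψ) : H)‖
        = ‖Submodule.orthogonalProjectionOnto (Kc M ψ) x‖ := rfl
      _ ≤ ‖Submodule.orthogonalProjectionOnto (Kc M ψ)‖ * ‖x‖ := le_opNorm _ _
      _ ≤ 1 * ‖x‖ := by
          have := Submodule.orthogonalProjectionOnto_norm_le (K := Kc M ψ)
          gcongr
      _ = ‖x‖ := one_mul _
  have hcontr : ∀ v : H, ∑ k, ‖t k v‖ ^ 2 ≤ ‖v‖ ^ 2 := by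
    intro v
    set w := ∑ k, S k (t k v) with hw
    have h1 : ⟪w, v⟫_ℂ = ((∑ k, ‖t k v‖ ^ 2 : ℝ) : ℂ) := by
      rw [hw, sum_inner]
      push_cast
      refine Finset.sum_congr rfl fun k _ => ?_
      rw [← adjoint_inner_right (S k) (t k v) v, ← ht, inner_self_eq_norm_sq_to_K]
      norm_cast
    have hSorth : ∀ {k k' : Fin d}, k ≠ k' → ∀ a b : H, ⟪S k a, S k' b⟫_ℂ = 0 := by
      intro k k' hkk a b
      rw [hS, hS]
      exact hSKorth hkk _ _
    have h2 : ‖w‖ ^ 2 = ∑ k, ‖S k (t k v)‖ ^ 2 := by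
      have h3 : ⟪w, w⟫_ℂ = ((∑ k, ‖S k (t k v)‖ ^ 2 : ℝ) : ℂ) := by
        rw [hw, sum_inner]
        push_cast
        refine Finset.sum_congr rfl fun k _ => ?_
        rw [inner_sum]
        have h4 : ∀ k' : Fin d, ⟪S k (t k v), S k' (t k' v)⟫_ℂ
            = if k' = k then (‖S k (t k v)‖ : ℂ) ^ 2 else 0 := by
          intro k'
          by_cases hkk : k' = k
          · subst hkk
            rw [if_pos rfl, inner_self_eq_norm_sq_to_K]
            norm_cast
          · rw [if_neg hkk]
            exact hSorth (fun h => hkk h.symm) _ _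
        rw [Finset.sum_congr rfl fun k' _ => h4 k', Finset.sum_ite_eq']
        simp
      have h5 : ((‖w‖ ^ 2 : ℝ) : ℂ) = ((∑ k, ‖S k (t k v)‖ ^ 2 : ℝ) : ℂ) := by
        rw [← h3, inner_self_eq_norm_sq_to_K]
        norm_cast
      exact_mod_cast h5
    have h6 : ∑ k, ‖t k v‖ ^ 2 = RCLike.re ⟪w, v⟫_ℂ := by
      rw [h1]
      simp [← Complex.ofReal_pow]
    have h7 : RCLike.re ⟪w, v⟫_ℂ ≤ ‖w‖ * ‖v‖ :=
      le_trans (RCLike.re_le_norm _) (norm_inner_le_norm w v)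
    have h8 : ‖w‖ ^ 2 ≤ ∑ k, ‖t k v‖ ^ 2 := by
      rw [h2]
      refine Finset.sum_le_sum fun k _ => ?_
      have h9 := hnormS k (t k v)
      have h10 := norm_nonneg ((S k) ((t k) v))
      gcongr
    have hnn : (0 : ℝ) ≤ ∑ k, ‖t k v‖ ^ 2 :=
      Finset.sum_nonneg fun k _ => sq_nonneg _
    nlinarith [norm_nonneg w, norm_nonneg v, sq_nonneg (‖w‖ - ‖v‖), sq_nonneg (‖w‖ + ‖v‖)]
  refine ⟨fun i k => if k = 0 then t i else 0, hR, ⟨?_, ?_⟩, hψ, ?_⟩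
  · intro i k
    by_cases hk : k = 0
    · subst hk
      simp only [if_pos rfl]
      exact htmem i
    · simp only [if_neg hk]
      exact zero_mem M.commutant
  · exact col_blockOp_norm_le t hcontr
  · intro i j
    show (R i 0) ((if (0 : Fin d) = 0 then t j else 0) ψ) = _
    rw [if_pos rfl]
    exact hfinal i j

end harddir

/-- A contraction `R` in `M_d ⊗ M` together with a unit vector `ψ` is a monopartite exact
embezzlement protocol for `α` in `(M, H)` if and only if there is a contraction `T` with
blocks in the commutant `M'` such that `(R, T, ψ)` is a bipartite exact embezzlement
protocol for `α` in `(M, M', H)`. -/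
theorem monopartite_iff_bipartite
    {H : Type*} [NormedAddCommGroup H] [InnerProductSpace ℂ H] [CompleteSpace H]
    (M : VonNeumannAlgebra H) {d : ℕ} [NeZero d] (hd : 2 ≤ d)
    (α : Fin d → ℝ) (hα : ∀ i, 0 < α i) (hsum : ∑ i, (α i) ^ 2 = 1)
    (R : Fin d → Fin d → H →L[ℂ] H) (ψ : H) :
    MonopartiteProtocol M α R ψ ↔
      ∃ T : Fin d → Fin d → H →L[ℂ] H, BipartiteProtocol M α R T ψ :=
  ⟨fun h => hard_dir M α hα R ψ h,
   fun ⟨T, hT⟩ => easy_dir M α hα hsum R T ψ hT⟩
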